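/- arXiv:2004.11621 — 3 statements merged into one kernel-verified Lean document; each statement's English description precedes it below -/
import Mathlib

section
/- Let G be a graph on 6n vertices with a partition (A, B, C, D) as above (|A|=|B|=n, |C|=|D|=2n, no edges between A and D, no edges between B and C), let F ⊆ E(G) with |F| ≤ n, and suppose G/F is a clique. Then every vertex of A ∪ B is incident to at least one edge of F. -/
open SimpleGraph

/-- Contraction of a set of edges `F` in `G`: the vertices are the connected components of
the graph spanned by `F`, two components adjacent iff some pair of their vertices is
adjacent in `G`. -/
def contract {V : Type*} (G : SimpleGraph V) (F : Set (Sym2 V)) :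
    SimpleGraph (SimpleGraph.fromEdgeSet F).ConnectedComponent where
  Adj c d := c ≠ d ∧ ∃ u v : V, (SimpleGraph.fromEdgeSet F).connectedComponentMk u = c ∧
      (SimpleGraph.fromEdgeSet F).connectedComponentMk v = d ∧ G.Adj u v
  symm := ⟨by
    rintro c d ⟨hne, u, v, hu, hv, h⟩
    exact ⟨hne.symm, v, u, hv, hu, h.symm⟩⟩
  loopless := ⟨fun c h => h.1 rfl⟩

/-- `G/F` is a complete graph. -/
def IsCliqueGraph {V : Type*} (G : SimpleGraph V) : Prop :=
  ∀ u v : V, u ≠ v → G.Adj u v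

/-- A set of edges is a matching if no two distinct edges share an endpoint. -/
def IsMatchingSet {V : Type*} (M : Set (Sym2 V)) : Prop :=
  ∀ e ∈ M, ∀ f ∈ M, e ≠ f → ∀ v : V, v ∈ e → v ∉ f


private lemma supp_le {V : Type*} (F : Set (Sym2 V)) (hF : F.Finite) :
    {x : V | ∃ e ∈ F, x ∈ e}.ncard ≤ 2 * F.ncard := by
  refine Set.Finite.induction_on
    (motive := fun F _ => {x : V | ∃ e ∈ F, x ∈ e}.ncard ≤ 2 * F.ncard) F hF (by simp) ?_
  intro e F' he hF' ih
  have hsub : {x : V | ∃ e' ∈ insert e F', x ∈ e'} ⊆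
      {x : V | x ∈ e} ∪ {x : V | ∃ e' ∈ F', x ∈ e'} := by
    rintro x ⟨e', he', hx⟩
    rcases he' with rfl | he'
    · exact Or.inl hx
    · exact Or.inr ⟨e', he', hx⟩
  have h1 : {x : V | x ∈ e}.ncard ≤ 2 := by
    obtain ⟨a, b⟩ := e
    have : {x : V | x ∈ s(a, b)} = {a, b} := by
      ext x; simp [Sym2.mem_iff]
    rw [this]
    exact (Set.ncard_insert_le a {b}).trans (by simp)
  have hfin1 : {x : V | x ∈ e}.Finite := by
    obtain ⟨a, b⟩ := e
    have : {x : V | x ∈ s(a, b)} = {a, b} := by ext x; simp [Sym2.mem_iff]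
    rw [this]; exact (Set.finite_singleton b).insert a
  have hfin2 : {x : V | ∃ e' ∈ F', x ∈ e'}.Finite := by
    have : {x : V | ∃ e' ∈ F', x ∈ e'} ⊆ ⋃ e' ∈ F', {x : V | x ∈ e'} := by
      rintro x ⟨e', he', hx⟩; exact Set.mem_biUnion he' hx
    refine Set.Finite.subset (Set.Finite.biUnion hF' ?_) this
    intro e' _
    obtain ⟨a, b⟩ := e'
    have : {x : V | x ∈ s(a, b)} = {a, b} := by ext x; simp [Sym2.mem_iff]
    rw [this]; exact (Set.finite_singleton b).insert a
  calc {x : V | ∃ e' ∈ insert e F', x ∈ e'}.ncard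
      ≤ ({x : V | x ∈ e} ∪ {x : V | ∃ e' ∈ F', x ∈ e'}).ncard :=
        Set.ncard_le_ncard hsub (hfin1.union hfin2)
    _ ≤ {x : V | x ∈ e}.ncard + {x : V | ∃ e' ∈ F', x ∈ e'}.ncard :=
        Set.ncard_union_le _ _
    _ ≤ 2 + 2 * F'.ncard := Nat.add_le_add h1 ih
    _ = 2 * (insert e F').ncard := by
        rw [Set.ncard_insert_of_notMem he hF']; ring

private lemma key {V : Type*} [Fintype V] (n : ℕ) (G : SimpleGraph V) (X : Set V)
    (hX : X.ncard = 2 * n) (F : Set (Sym2 V)) (hFcard : F.ncard ≤ n)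
    (hclique : IsCliqueGraph (contract G F)) (v : V) (hvX : v ∉ X)
    (hnadj : ∀ d ∈ X, ¬ G.Adj v d) (hn : 1 ≤ n) : ∃ e ∈ F, v ∈ e := by
  by_contra hcon
  push_neg at hcon
  -- v is isolated in fromEdgeSet F
  have no_reach : ∀ u : V, (fromEdgeSet F).Reachable v u → u = v := by
    intro u hr
    obtain ⟨p⟩ := hr
    cases p with
    | nil => rfl
    | cons h q =>
      rw [fromEdgeSet_adj] at h
      exact absurd (Sym2.mem_mk_left _ _) (hcon _ h.1)
  have touched : ∀ w u : V, w ≠ u → (fromEdgeSet F).Reachable w u →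
      ∃ e ∈ F, w ∈ e := by
    intro w u hne hr
    obtain ⟨p⟩ := hr
    cases p with
    | nil => exact absurd rfl hne
    | cons h q =>
      rw [fromEdgeSet_adj] at h
      exact ⟨_, h.1, Sym2.mem_mk_left _ _⟩
  -- for each w ∈ X, get a G-neighbor u' of v in the component of w
  have main : ∀ w ∈ X, ∃ u' : V, u' ∉ X ∧ u' ≠ w ∧
      (fromEdgeSet F).Reachable w u' := by
    intro w hw
    have hwv : w ≠ v := fun h => hvX (h ▸ hw)
    have hne : (fromEdgeSet F).connectedComponentMk v ≠
        (fromEdgeSet F).connectedComponentMk w := by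
      intro h
      exact hwv (no_reach w (ConnectedComponent.eq.mp h))
    obtain ⟨-, u, u', hu, hu', hadj⟩ := hclique _ _ hne
    have huv : u = v := no_reach u (ConnectedComponent.eq.mp hu).symm
    subst huv
    have hu'X : u' ∉ X := fun h => hnadj u' h hadj
    have hu'w : u' ≠ w := by
      intro h; subst h; exact hnadj u' ‹u' ∈ X› hadj
    exact ⟨u', hu'X, hu'w, (ConnectedComponent.eq.mp hu').symm⟩
  set S : Set V := {x : V | ∃ e ∈ F, x ∈ e} with hS
  have hXS : X ⊆ S := by
    intro w hw
    obtain ⟨u', _, hu'w, hr⟩ := main w hw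
    exact touched w u' (Ne.symm hu'w) hr
  obtain ⟨w₀, hw₀⟩ : X.Nonempty :=
    Set.nonempty_of_ncard_ne_zero (by omega)
  obtain ⟨u', hu'X, hu'w, hr⟩ := main w₀ hw₀
  have hu'S : u' ∈ S := touched u' w₀ hu'w hr.symm
  have hins : insert u' X ⊆ S := Set.insert_subset hu'S hXS
  have hSfin : S.Finite := Set.toFinite S
  have h1 : (insert u' X).ncard ≤ S.ncard := Set.ncard_le_ncard hins hSfin
  have hXfin : X.Finite := Set.toFinite X
  rw [Set.ncard_insert_of_notMem hu'X hXfin, hX] at h1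
  have hFfin : F.Finite := Set.toFinite F
  have h2 : S.ncard ≤ 2 * F.ncard := supp_le F hFfin
  omega

theorem stmt_3 {V : Type*} [Fintype V] (n : ℕ) (G : SimpleGraph V)
    (A B C D : Set V)
    (hunion : A ∪ B ∪ C ∪ D = Set.univ)
    (hAB : Disjoint A B) (hAC : Disjoint A C) (hAD : Disjoint A D)
    (hBC : Disjoint B C) (hBD : Disjoint B D) (hCD : Disjoint C D)
    (hV : Fintype.card V = 6 * n)
    (hA : A.ncard = n) (hB : B.ncard = n) (hC : C.ncard = 2 * n) (hD : D.ncard = 2 * n)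
    (hADedge : ∀ a ∈ A, ∀ d ∈ D, ¬ G.Adj a d)
    (hBCedge : ∀ b ∈ B, ∀ c ∈ C, ¬ G.Adj b c)
    (F : Set (Sym2 V)) (hFE : F ⊆ G.edgeSet) (hFcard : F.ncard ≤ n)
    (hclique : IsCliqueGraph (contract G F)) :
    ∀ v ∈ A ∪ B, ∃ e ∈ F, v ∈ e := by
  intro v hv
  have hn : 1 ≤ n := by
    have hpos : 0 < Fintype.card V := Fintype.card_pos_iff.mpr ⟨v⟩
    omega
  rcases hv with hvA | hvB
  · exact key n G D hD F hFcard hclique v (Set.disjoint_left.mp hAD hvA)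
      (fun d hd => hADedge v hvA d hd) hn
  · exact key n G C hC F hFcard hclique v (Set.disjoint_left.mp hBC hvB)
      (fun c hc => hBCedge v hvB c hc) hn
end

section
/- Let G and H be graphs with |V(G)| = |V(H)|, with proper colorings c_G, c_H into the same color set, and lists ℓ : V(G) → 2^{V(H)} with c_G(u) = c_H(v) whenever v ∈ ℓ(u). Define L on V(Ḡ) ∪ V(H) with edges E(Ḡ) ∪ E(H) ∪ {{u,v} : u ∈ V(G), v ∈ ℓ(u)}, and set A = V(Ḡ), B = V(H). Then there exists a bijection φ : V(G) → V(H) with φ(u) ∈ ℓ(u) for all u and {φ(u), φ(v)} ∈ E(H) for every {u,v} ∈ E(G), if and only if there exists a perfect matching M of L in which every edge has one endpoint in A and one in B, such that L/M is a clique. -/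
open SimpleGraph

/-- The auxiliary relation defining the graph `L` on `V(Ḡ) ∪ V(H)`: the complement of `G`
lives on the left, `H` lives on the right, and a left vertex `u` is joined to a right
vertex `v` iff `v ∈ ℓ u`. -/
def lRel {α β : Type*} (G : SimpleGraph α) (H : SimpleGraph β) (ℓ : α → Set β) :
    (α ⊕ β) → (α ⊕ β) → Prop
  | Sum.inl u, Sum.inl v => ¬ G.Adj u v
  | Sum.inr u, Sum.inr v => H.Adj u v
  | Sum.inl u, Sum.inr v => v ∈ ℓ u
  | Sum.inr _, Sum.inl _ => False

lemma matching_reach {V : Type*} {M : Set (Sym2 V)} (hM : IsMatchingSet M)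
    {u v : V} (h : (SimpleGraph.fromEdgeSet M).Reachable u v) :
    u = v ∨ s(u, v) ∈ M := by
  obtain ⟨p⟩ := h
  induction p with
  | nil => exact Or.inl rfl
  | @cons u b v h p ih =>
    rw [fromEdgeSet_adj] at h
    obtain ⟨hub, hne⟩ := h
    rcases ih with rfl | hbv
    · exact Or.inr hub
    · by_cases heq : s(u, b) = s(b, v)
      · rw [Sym2.eq_iff] at heq
        rcases heq with ⟨h1, h2⟩ | ⟨h1, h2⟩
        · exact absurd h1 hne
        · exact Or.inl h1
      · exact absurd (Sym2.mem_mk_left b v) (hM _ hub _ hbv heq b (Sym2.mem_mk_right u b))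

theorem stmt_6 {α β : Type*} [Fintype α] [Fintype β] (k : ℕ)
    (G : SimpleGraph α) (H : SimpleGraph β)
    (hcard : Fintype.card α = Fintype.card β)
    (cG : α → Fin k) (cH : β → Fin k)
    (hcG : ∀ u v, G.Adj u v → cG u ≠ cG v)
    (hcH : ∀ u v, H.Adj u v → cH u ≠ cH v)
    (ℓ : α → Set β) (hℓ : ∀ u : α, ∀ v ∈ ℓ u, cG u = cH v) :
    (∃ φ : α ≃ β, (∀ u : α, φ u ∈ ℓ u) ∧
        ∀ u v : α, G.Adj u v → H.Adj (φ u) (φ v)) ↔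
      (∃ M : Set (Sym2 (α ⊕ β)),
        M ⊆ (SimpleGraph.fromRel (lRel G H ℓ)).edgeSet ∧ IsMatchingSet M ∧
        (∀ w : α ⊕ β, ∃ e ∈ M, w ∈ e) ∧
        (∀ e ∈ M, ∃ (a : α) (b : β), e = s(Sum.inl a, Sum.inr b)) ∧
        IsCliqueGraph (contract (SimpleGraph.fromRel (lRel G H ℓ)) M)) := by
  set L := SimpleGraph.fromRel (lRel G H ℓ) with hL
  constructor
  · rintro ⟨φ, hmem, hadj⟩
    refine ⟨Set.range (fun a => s(Sum.inl a, (Sum.inr (φ a) : α ⊕ β))), ?_, ?_, ?_, ?_, ?_⟩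
    · rintro e ⟨a, rfl⟩
      rw [mem_edgeSet, hL, fromRel_adj]
      exact ⟨by simp, Or.inl (hmem a)⟩
    · rintro e ⟨a, rfl⟩ f ⟨a', rfl⟩ hne v hv hv'
      simp only [Sym2.mem_iff] at hv hv'
      rcases hv with rfl | rfl <;> rcases hv' with h | h <;>
        simp only [Sum.inl.injEq, Sum.inr.injEq, reduceCtorEq] at h
      · exact hne (by rw [h])
      · exact hne (by rw [φ.injective h])
    · rintro (a | b)
      · exact ⟨_, ⟨a, rfl⟩, Sym2.mem_mk_left _ _⟩
      · exact ⟨_, ⟨φ.symm b, rfl⟩, by simp⟩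
    · rintro e ⟨a, rfl⟩
      exact ⟨a, φ a, rfl⟩
    · -- clique
      set F := SimpleGraph.fromEdgeSet
        (Set.range (fun a => s(Sum.inl a, (Sum.inr (φ a) : α ⊕ β)))) with hF
      have hcomp : ∀ b : β, F.connectedComponentMk (Sum.inr b)
          = F.connectedComponentMk (Sum.inl (φ.symm b)) := by
        intro b
        apply ConnectedComponent.sound
        apply Adj.reachable
        rw [hF, fromEdgeSet_adj]
        exact ⟨⟨φ.symm b, by simp⟩, by simp⟩
      intro c d hne
      refine ⟨hne, ?_⟩
      obtain ⟨a, ha⟩ : ∃ a : α, F.connectedComponentMk (Sum.inl a) = c := by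
        obtain ⟨w, rfl⟩ := c.exists_rep
        rcases w with a | b
        · exact ⟨a, rfl⟩
        · exact ⟨φ.symm b, (hcomp b).symm⟩
      obtain ⟨a', ha'⟩ : ∃ a' : α, F.connectedComponentMk (Sum.inl a') = d := by
        obtain ⟨w', rfl⟩ := d.exists_rep
        rcases w' with a | b
        · exact ⟨a, rfl⟩
        · exact ⟨φ.symm b, (hcomp b).symm⟩
      have haa' : a ≠ a' := by
        rintro rfl
        exact hne (ha.symm.trans ha')
      by_cases hG : G.Adj a a'
      · refine ⟨Sum.inr (φ a), Sum.inr (φ a'), ?_, ?_, ?_⟩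
        · rw [hcomp (φ a)]; simp only [Equiv.symm_apply_apply]; exact ha
        · rw [hcomp (φ a')]; simp only [Equiv.symm_apply_apply]; exact ha'
        · rw [hL, fromRel_adj]
          exact ⟨by simpa using haa', Or.inl (hadj a a' hG)⟩
      · refine ⟨Sum.inl a, Sum.inl a', ha, ha', ?_⟩
        rw [hL, fromRel_adj]
        exact ⟨by simpa using haa', Or.inl hG⟩
  · rintro ⟨M, hsub, hmatch, hcover, hform, hclique⟩
    -- extract the function
    have key : ∀ a : α, ∃ b : β, s(Sum.inl a, (Sum.inr b : α ⊕ β)) ∈ M := by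
      intro a
      obtain ⟨e, heM, hae⟩ := hcover (Sum.inl a)
      obtain ⟨a', b, rfl⟩ := hform e heM
      simp only [Sym2.mem_iff, Sum.inl.injEq, reduceCtorEq, or_false] at hae
      exact ⟨b, by rw [hae]; exact heM⟩
    choose f hf using key
    have huniq : ∀ (a : α) (b : β), s(Sum.inl a, (Sum.inr b : α ⊕ β)) ∈ M → b = f a := by
      intro a b hb
      by_cases heq : s(Sum.inl a, (Sum.inr b : α ⊕ β)) = s(Sum.inl a, (Sum.inr (f a) : α ⊕ β))
      · simpa using heq
      · exact absurd (Sym2.mem_mk_left _ _)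
          (hmatch _ hb _ (hf a) heq _ (Sym2.mem_mk_left _ _))
    have hinj : Function.Injective f := by
      intro a a' hfa
      by_contra hne
      have hne' : s(Sum.inl a, (Sum.inr (f a) : α ⊕ β))
          ≠ s(Sum.inl a', (Sum.inr (f a') : α ⊕ β)) := by
        simp [Sym2.eq_iff, hne]
      exact hmatch _ (hf a) _ (hf a') hne' (Sum.inr (f a)) (Sym2.mem_mk_right _ _)
        (by rw [hfa]; exact Sym2.mem_mk_right _ _)
    have hsurj : Function.Surjective f := by
      intro b
      obtain ⟨e, heM, hbe⟩ := hcover (Sum.inr b)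
      obtain ⟨a, b', rfl⟩ := hform e heM
      simp only [Sym2.mem_iff, Sum.inr.injEq, reduceCtorEq, false_or] at hbe
      exact ⟨a, (huniq a b (by rw [← hbe] at heM; exact heM)).symm⟩
    have hmemf : ∀ a : α, f a ∈ ℓ a := by
      intro a
      have := hsub (hf a)
      rw [mem_edgeSet, hL, fromRel_adj] at this
      rcases this.2 with h | h
      · exact h
      · exact h.elim
    refine ⟨Equiv.ofBijective f ⟨hinj, hsurj⟩, fun a => hmemf a, ?_⟩
    intro u v hG
    show H.Adj (f u) (f v)
    set F := SimpleGraph.fromEdgeSet M with hF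
    -- characterize components
    have hcompchar : ∀ (w : α ⊕ β) (a : α),
        F.connectedComponentMk w = F.connectedComponentMk (Sum.inl a) →
        w = Sum.inl a ∨ w = Sum.inr (f a) := by
      intro w a h
      rcases matching_reach hmatch (ConnectedComponent.exact h) with h' | h'
      · exact Or.inl h'
      · obtain ⟨a', b, he⟩ := hform _ h'
        rw [Sym2.eq_iff] at he
        rcases he with ⟨h1, h2⟩ | ⟨h1, h2⟩
        · exact absurd h2 (by simp)
        · subst h1
          rw [Sum.inl.injEq] at h2; subst h2
          exact Or.inr (by rw [huniq a b (by rwa [Sym2.eq_swap] at h')])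
    have hnecomp : F.connectedComponentMk (Sum.inl u) ≠ F.connectedComponentMk (Sum.inl v) := by
      intro h
      rcases matching_reach hmatch (ConnectedComponent.exact h) with h' | h'
      · exact hG.ne (by simpa using h')
      · obtain ⟨a', b, he⟩ := hform _ h'
        rw [Sym2.eq_iff] at he
        rcases he with ⟨h1, h2⟩ | ⟨h1, h2⟩ <;> simp at h1 h2
    obtain ⟨-, w, w', hw, hw', hLadj⟩ := hclique _ _ hnecomp
    rw [hL, fromRel_adj] at hLadj
    obtain ⟨hww', hrel⟩ := hLadj
    rcases hcompchar w u hw with rfl | rfl <;> rcases hcompchar w' v hw' with rfl | rfl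
    · -- inl u, inl v : both directions say ¬ G.Adj, contradiction
      exfalso
      rcases hrel with h | h
      · exact h hG
      · exact h hG.symm
    · -- inl u, inr (f v) : colors clash
      exfalso
      have hmem' : f v ∈ ℓ u := by
        rcases hrel with h | h
        · exact h
        · exact h.elim
      exact hcG u v hG ((hℓ u _ hmem').trans (hℓ v _ (hmemf v)).symm)
    · -- inr (f u), inl v
      exfalso
      have hmem' : f u ∈ ℓ v := by
        rcases hrel with h | h
        · exact h.elim
        · exact h
      exact hcG u v hG ((hℓ u _ (hmemf u)).trans (hℓ v _ hmem').symm)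
    · rcases hrel with h | h
      · exact h
      · exact h.symm
end

section
/- Let G and H be graphs with proper colorings c_G and c_H into a common color set, and lists ℓ with c_G(u) = c_H(v) whenever v ∈ ℓ(u). Let L be the graph on V(Ḡ) ∪ V(H) with edges E(Ḡ) ∪ E(H) ∪ {{u,v} : u ∈ V(G), v ∈ ℓ(u)}, and let M be a perfect matching of L between A = V(Ḡ) and B = V(H) with L/M a clique. Then the bijection φ : V(G) → V(H) defined by φ(u) = the M-partner of u satisfies: for every edge {u,v} ∈ E(G), {φ(u), φ(v)} ∈ E(H). -/
open SimpleGraph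

lemma matching_unique {V : Type*} {M : Set (Sym2 V)} (hmatch : IsMatchingSet M)
    {e f : Sym2 V} (he : e ∈ M) (hf : f ∈ M) {v : V} (hv : v ∈ e) (hv' : v ∈ f) : e = f := by
  by_contra h
  exact hmatch e he f hf h v hv hv'

lemma reach_comp {V : Type*} {M : Set (Sym2 V)} (hmatch : IsMatchingSet M)
    {a b : V} (hab : s(a, b) ∈ M) :
    ∀ x y : V, (SimpleGraph.fromEdgeSet M).Reachable x y → (x = a ∨ x = b) → (y = a ∨ y = b) := by
  intro x y hxy hx
  obtain ⟨p⟩ := hxy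
  induction p with
  | nil => exact hx
  | cons h p ih =>
    apply ih
    rw [SimpleGraph.fromEdgeSet_adj] at h
    rcases hx with rfl | rfl
    · have := matching_unique hmatch h.1 hab (Sym2.mem_mk_left _ _) (Sym2.mem_mk_left _ _)
      rw [Sym2.eq_iff] at this
      rcases this with ⟨h1, h2⟩ | ⟨h1, h2⟩
      · exact Or.inr h2
      · exact Or.inl h2
    · have := matching_unique hmatch h.1 hab (Sym2.mem_mk_left _ _) (Sym2.mem_mk_right _ _)
      rw [Sym2.eq_iff] at this
      rcases this with ⟨h1, h2⟩ | ⟨h1, h2⟩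
      · exact Or.inr h2
      · exact Or.inl h2

theorem stmt_16 {α β : Type*} (k : ℕ) (G : SimpleGraph α) (H : SimpleGraph β)
    (cG : α → Fin k) (cH : β → Fin k)
    (hcG : ∀ u v, G.Adj u v → cG u ≠ cG v)
    (hcH : ∀ u v, H.Adj u v → cH u ≠ cH v)
    (ℓ : α → Set β) (hℓ : ∀ u : α, ∀ v ∈ ℓ u, cG u = cH v)
    (M : Set (Sym2 (α ⊕ β)))
    (hME : M ⊆ (SimpleGraph.fromRel (lRel G H ℓ)).edgeSet)
    (hmatch : IsMatchingSet M)
    (hperfect : ∀ w : α ⊕ β, ∃ e ∈ M, w ∈ e)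
    (hcrossM : ∀ e ∈ M, ∃ (a : α) (b : β), e = s(Sum.inl a, Sum.inr b))
    (hclique : IsCliqueGraph (contract (SimpleGraph.fromRel (lRel G H ℓ)) M))
    (φ : α → β) (hφ : ∀ u : α, s(Sum.inl u, Sum.inr (φ u)) ∈ M) :
    ∀ u v : α, G.Adj u v → H.Adj (φ u) (φ v) := by
  -- each φ a is in ℓ a
  have hmem : ∀ a : α, φ a ∈ ℓ a := by
    intro a
    have := hME (hφ a)
    rw [SimpleGraph.mem_edgeSet, SimpleGraph.fromRel_adj] at this
    rcases this.2 with h | h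
    · exact h
    · exact h.elim
  intro u v huv
  set F := SimpleGraph.fromEdgeSet M with hF
  -- components are distinct
  have hne : F.connectedComponentMk (Sum.inl u) ≠ F.connectedComponentMk (Sum.inl v) := by
    intro h
    have hr : F.Reachable (Sum.inl u) (Sum.inl v) := SimpleGraph.ConnectedComponent.exact h
    rcases reach_comp hmatch (hφ u) _ _ hr (Or.inl rfl) with h1 | h1
    · exact huv.ne (Sum.inl.inj h1).symm
    · exact Sum.inl_ne_inr h1
  obtain ⟨_, x, y, hx, hy, hadj⟩ := hclique _ _ hne
  have hx' : x = Sum.inl u ∨ x = Sum.inr (φ u) :=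
    reach_comp hmatch (hφ u) _ _ (SimpleGraph.ConnectedComponent.exact hx.symm) (Or.inl rfl)
  have hy' : y = Sum.inl v ∨ y = Sum.inr (φ v) :=
    reach_comp hmatch (hφ v) _ _ (SimpleGraph.ConnectedComponent.exact hy.symm) (Or.inl rfl)
  rw [SimpleGraph.fromRel_adj] at hadj
  have hcu : cG u = cH (φ u) := hℓ u _ (hmem u)
  have hcv : cG v = cH (φ v) := hℓ v _ (hmem v)
  rcases hx' with rfl | rfl <;> rcases hy' with rfl | rfl
  · rcases hadj.2 with h | h
    · exact absurd huv h
    · exact absurd huv.symm h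
  · rcases hadj.2 with h | h
    · exact absurd ((hℓ u _ h).trans hcv.symm) (hcG u v huv)
    · exact h.elim
  · rcases hadj.2 with h | h
    · exact h.elim
    · exact absurd ((hℓ v _ h).trans hcu.symm).symm (hcG u v huv)
  · rcases hadj.2 with h | h
    · exact h
    · exact h.symm
end
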